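/- Let α ∈ (0,1], let g : ℕ^E → ℝ be normalized, and let c be nonnegative linear. Suppose x ∈ ℕ^E is obtained from the zero vector by steps x_i = x_{i-1} + l_i·χ_{e_i} with g(x_{i-1} + l_i·χ_{e_i}) − g(x_{i-1}) − (1+α)·c(l_i·χ_{e_i}) ≥ l_i·τ_α for each step. Then c(x) ≤ (1/(1+α))·g(x) − (τ_α/(1+α))·x(E). (Cost upper bound for the accepted solution in the αG−C streaming algorithm.) -/
import Mathlib


/-- Cost upper bound for the accepted solution in the αG−C streaming algorithm. -/
theorem stmt_10 {E : Type*} [Fintype E] [DecidableEq E]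
    (α : ℝ) (hα0 : 0 < α) (hα1 : α ≤ 1)
    (g c : (E → ℕ) → ℝ)
    (hg0 : g 0 = 0)
    (w : E → ℝ) (hw : ∀ e, 0 ≤ w e)
    (hc : ∀ x : E → ℕ, c x = ∑ e, w e * (x e : ℝ))
    (τα : ℝ)
    (q : ℕ) (e : ℕ → E) (l : ℕ → ℕ) (hl : ∀ i < q, 0 < l i)
    (xs : ℕ → E → ℕ) (hx0 : xs 0 = 0)
    (hstep : ∀ i < q, xs (i + 1) = xs i + (l i) • Pi.single (e i) 1)
    (x : E → ℕ) (hxq : xs q = x)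
    (hineq : ∀ i < q,
      g (xs i + (l i) • Pi.single (e i) 1) - g (xs i)
        - (1 + α) * c ((l i) • Pi.single (e i) 1) ≥ (l i : ℝ) * τα) :
    c x ≤ (1 / (1 + α)) * g x - (τα / (1 + α)) * (∑ e', (x e' : ℝ)) := by
  have h1 : (0:ℝ) < 1 + α := by linarith
  have hcadd : ∀ a b : E → ℕ, c (a + b) = c a + c b := by
    intro a b
    simp [hc, Pi.add_apply, Nat.cast_add, mul_add, Finset.sum_add_distrib]
  have hsumstep : ∀ a : E → ℕ, ∀ (n : ℕ) (e0 : E),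
      (∑ e', (((a + n • Pi.single e0 1 : E → ℕ)) e' : ℝ)) = (∑ e', (a e' : ℝ)) + n := by
    intro a n e0
    simp [Pi.add_apply, Nat.cast_add, Finset.sum_add_distrib, Pi.single_apply,
      Finset.sum_ite_eq', mul_ite]
  have key : ∀ n, n ≤ q →
      (1 + α) * c (xs n) + τα * (∑ e', (xs n e' : ℝ)) ≤ g (xs n) := by
    intro n
    induction n with
    | zero => intro _; simp [hx0, hc, hg0]
    | succ n ih =>
      intro h
      have hn : n < q := h
      have ihn := ih (le_of_lt hn)
      have hi := hineq n hn
      have hs := hstep n hn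
      rw [hs, hcadd, hsumstep]
      nlinarith [hi, ihn]
  have hk := key q le_rfl
  rw [hxq] at hk
  have hrw : (1 / (1 + α)) * g x - (τα / (1 + α)) * (∑ e', (x e' : ℝ))
      = (g x - τα * (∑ e', (x e' : ℝ))) / (1 + α) := by ring
  rw [hrw, le_div_iff₀ h1]
  linarith
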